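/- arXiv:2501.05437 — 9 statements merged into one kernel-verified Lean document; each statement's English description precedes it below -/
import Mathlib

section
/- For positive differentiable functions x, y on an interval satisfying (xy²)' = x²/2 + y², the function g defined by g³ = xy² satisfies g' = (1/6)(x/y)^{4/3} + (1/3)(y/x)^{2/3}, and in particular g' ≥ 1/2, with equality if and only if x = y. -/
lemma aux_rpow (a : ℝ) (ha : 0 < a) (k : ℕ) :
    a ^ ((k : ℝ) / 3) = (a ^ ((1 : ℝ) / 3)) ^ k := by
  rw [← Real.rpow_natCast (a ^ ((1:ℝ)/3)) k, ← Real.rpow_mul ha.le]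
  ring_nf

lemma key_eq (a b : ℝ) (ha : 0 < a) (hb : 0 < b) :
    (a ^ 2 / 2 + b ^ 2) * ((1:ℝ)/3) * (a * b ^ 2) ^ ((1:ℝ)/3 - 1)
      = 1 / 6 * (a / b) ^ ((4:ℝ)/3) + 1 / 3 * (b / a) ^ ((2:ℝ)/3) := by
  set p := a ^ ((1:ℝ)/3) with hpdef
  set q := b ^ ((1:ℝ)/3) with hqdef
  have hp : 0 < p := Real.rpow_pos_of_pos ha _
  have hq : 0 < q := Real.rpow_pos_of_pos hb _
  have hap : a = p ^ 3 := by
    rw [hpdef, ← Real.rpow_natCast (a ^ ((1:ℝ)/3)) 3, ← Real.rpow_mul ha.le]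
    norm_num
  have hbq : b = q ^ 3 := by
    rw [hqdef, ← Real.rpow_natCast (b ^ ((1:ℝ)/3)) 3, ← Real.rpow_mul hb.le]
    norm_num
  have hu : 0 < a * b ^ 2 := by positivity
  have h1 : (a * b ^ 2) ^ ((1:ℝ)/3 - 1) = ((p * q ^ 2) ^ 2)⁻¹ := by
    have : ((1:ℝ)/3 - 1) = -(((2:ℕ) : ℝ) / 3) := by norm_num
    rw [this, Real.rpow_neg hu.le, aux_rpow _ hu]
    have : (a * b ^ 2) ^ ((1:ℝ)/3) = p * q ^ 2 := by
      rw [Real.mul_rpow ha.le (by positivity), hpdef, hqdef]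
      congr 1
      have : b ^ 2 = b ^ ((2:ℕ) : ℝ) := by rw [Real.rpow_natCast]
      rw [this, ← Real.rpow_natCast (b ^ ((1:ℝ)/3)) 2, ← Real.rpow_mul hb.le,
        ← Real.rpow_mul hb.le]
      norm_num
    rw [this]
  have h2 : (a / b) ^ ((4:ℝ)/3) = (p / q) ^ 4 := by
    have h := aux_rpow (a / b) (by positivity) 4
    norm_num at h
    rw [h, Real.div_rpow ha.le hb.le]
  have h3 : (b / a) ^ ((2:ℝ)/3) = (q / p) ^ 2 := by
    have h := aux_rpow (b / a) (by positivity) 2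
    norm_num at h
    rw [h, Real.div_rpow hb.le ha.le]
  rw [h1, h2, h3, hap, hbq]
  field_simp
  ring

theorem stmt3 (I : Set ℝ) (hI : IsOpen I) (x y : ℝ → ℝ)
    (hx : ∀ t ∈ I, 0 < x t) (hy : ∀ t ∈ I, 0 < y t)
    (hclose : ∀ t ∈ I,
      HasDerivAt (fun s => x s * y s ^ 2) (x t ^ 2 / 2 + y t ^ 2) t) :
    ∀ t ∈ I,
      HasDerivAt (fun s => (x s * y s ^ 2) ^ ((1 : ℝ) / 3))
        (1 / 6 * (x t / y t) ^ ((4 : ℝ) / 3)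
          + 1 / 3 * (y t / x t) ^ ((2 : ℝ) / 3)) t ∧
      1 / 2 ≤ 1 / 6 * (x t / y t) ^ ((4 : ℝ) / 3)
          + 1 / 3 * (y t / x t) ^ ((2 : ℝ) / 3) ∧
      (1 / 6 * (x t / y t) ^ ((4 : ℝ) / 3)
          + 1 / 3 * (y t / x t) ^ ((2 : ℝ) / 3) = 1 / 2 ↔ x t = y t) := by
  intro t ht
  have hxt := hx t ht
  have hyt := hy t ht
  have hu : 0 < x t * y t ^ 2 := by positivity
  constructor
  · have hd := (hclose t ht).rpow_const (p := (1:ℝ)/3) (Or.inl hu.ne')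
    convert hd using 1
    exact (key_eq (x t) (y t) hxt hyt).symm
  · -- inequality and equality condition
    have hr : 0 < x t / y t := by positivity
    set a := (x t / y t) ^ ((2:ℝ)/3) with hadef
    have ha : 0 < a := Real.rpow_pos_of_pos hr _
    have h4 : (x t / y t) ^ ((4:ℝ)/3) = a ^ 2 := by
      rw [hadef, ← Real.rpow_natCast ((x t / y t) ^ ((2:ℝ)/3)) 2,
        ← Real.rpow_mul hr.le]
      norm_num
    have hinv : (y t / x t) ^ ((2:ℝ)/3) = a⁻¹ := by
      have : y t / x t = (x t / y t)⁻¹ := by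
        field_simp
      rw [this, ← Real.rpow_natCast _ 2] at *
      rw [hadef, ← Real.inv_rpow hr.le]
    have hval : 1 / 6 * (x t / y t) ^ ((4:ℝ)/3) + 1 / 3 * (y t / x t) ^ ((2:ℝ)/3)
        = 1 / 6 * a ^ 2 + 1 / 3 * a⁻¹ := by rw [h4, hinv]
    have hfact : 1 / 6 * a ^ 2 + 1 / 3 * a⁻¹ - 1 / 2 = (a - 1) ^ 2 * (a + 2) / (6 * a) := by
      field_simp
      ring
    constructor
    · rw [hval]
      have hpos : 0 ≤ (a - 1) ^ 2 * (a + 2) / (6 * a) := by positivity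
      linarith
    · rw [hval]
      constructor
      · intro h
        have ha1 : a = 1 := by
          have h0 : (a - 1) ^ 2 * (a + 2) / (6 * a) = 0 := by
            rw [← hfact]; linarith
          have h0' : (a - 1) ^ 2 * (a + 2) = 0 := by
            rcases div_eq_zero_iff.mp h0 with h0 | h0
            · exact h0
            · exfalso; nlinarith
          nlinarith [sq_nonneg (a - 1), sq_abs (a-1)]
        -- from a = 1 deduce x t / y t = 1
        have : x t / y t = 1 := by
          have h1 : ((x t / y t) ^ ((2:ℝ)/3)) ^ ((3:ℝ)/2) = (1:ℝ) ^ ((3:ℝ)/2) := by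
            rw [← hadef, ha1]
          rw [← Real.rpow_mul hr.le] at h1
          norm_num at h1
          exact h1
        field_simp at this
        exact this
      · intro h
        have : a = 1 := by
          rw [hadef, h, div_self hyt.ne', Real.one_rpow]
        rw [this]
        norm_num
end

section
/- Along any solution of the Sp(2)-invariant soliton system, the adjusted torsion satisfies τ̃₁' = λx² and τ̃₂' = λy²; in particular, on an expander (λ > 0) both τ̃₁ and τ̃₂ are strictly increasing, so positivity of τ̃₁ (resp. τ̃₂) is preserved forward in time. -/
/-- The Sp(2)-invariant soliton first-order ODE system for `(x, y, τ₂)`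
with dilation constant `lam`, on a set `I`. -/
def sp2System (lam : ℝ) (x y τ : ℝ → ℝ) (I : Set ℝ) : Prop :=
  ∀ t ∈ I,
    HasDerivAt (fun s => x s ^ 2)
      (2 * x t - x t ^ 2 / y t ^ 2 * (x t + 2 * τ t)) t ∧
    HasDerivAt (fun s => y s ^ 2) (x t + τ t) t ∧
    HasDerivAt τ
      (4 * (lam * x t * y t ^ 2 - 3 * τ t) *
          (y t ^ 2 - x t ^ 2 - 3 / 2 * x t * τ t) /
        (3 * x t * (x t ^ 2 + 2 * y t ^ 2))) t

/-- `τ₁ := −(2x²/y²)·τ₂`. -/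
noncomputable def tau1V (x y τ : ℝ) : ℝ := -(2 * x ^ 2 / y ^ 2) * τ

/-- `u := (2(y²−x²)τ₂ − 2λxy⁴)/(y²(x²+2y²))`. -/
noncomputable def uV (lam x y τ : ℝ) : ℝ :=
  (2 * (y ^ 2 - x ^ 2) * τ - 2 * lam * x * y ^ 4) / (y ^ 2 * (x ^ 2 + 2 * y ^ 2))

/-- Adjusted torsion `τ̃₁ := τ₁ − u·x²`. -/
noncomputable def tt1V (lam x y τ : ℝ) : ℝ := tau1V x y τ - uV lam x y τ * x ^ 2

/-- Adjusted torsion `τ̃₂ := τ₂ − u·y²`. -/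
noncomputable def tt2V (lam x y τ : ℝ) : ℝ := τ - uV lam x y τ * y ^ 2

theorem stmt7 (lam : ℝ) (x y τ : ℝ → ℝ) (I : Set ℝ)
    (hIo : IsOpen I) (hIc : Convex ℝ I)
    (hx : ∀ t ∈ I, 0 < x t) (hy : ∀ t ∈ I, 0 < y t)
    (hsys : sp2System lam x y τ I) :
    (∀ t ∈ I,
      HasDerivAt (fun s => tt1V lam (x s) (y s) (τ s)) (lam * x t ^ 2) t ∧
      HasDerivAt (fun s => tt2V lam (x s) (y s) (τ s)) (lam * y t ^ 2) t) ∧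
    (0 < lam →
      StrictMonoOn (fun s => tt1V lam (x s) (y s) (τ s)) I ∧
      StrictMonoOn (fun s => tt2V lam (x s) (y s) (τ s)) I ∧
      (∀ s ∈ I, ∀ t ∈ I, s ≤ t →
        0 < tt1V lam (x s) (y s) (τ s) → 0 < tt1V lam (x t) (y t) (τ t)) ∧
      (∀ s ∈ I, ∀ t ∈ I, s ≤ t →
        0 < tt2V lam (x s) (y s) (τ s) → 0 < tt2V lam (x t) (y t) (τ t))) := by
  have key : ∀ t ∈ I,
      HasDerivAt (fun s => tt1V lam (x s) (y s) (τ s)) (lam * x t ^ 2) t ∧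
      HasDerivAt (fun s => tt2V lam (x s) (y s) (τ s)) (lam * y t ^ 2) t := by
    intro t ht
    obtain ⟨ha, hb, hτ'⟩ := hsys t ht
    have hX := hx t ht
    have hY := hy t ht
    have hXne : x t ≠ 0 := hX.ne'
    have hYne : y t ≠ 0 := hY.ne'
    have hden : y t ^ 2 * (x t ^ 2 + 2 * y t ^ 2) ≠ 0 := by positivity
    have hden2 : (x t ^ 2 + 2 * y t ^ 2) ≠ 0 := by positivity
    have hx2ne : x t ^ 2 ≠ 0 := pow_ne_zero _ hXne
    have hy2ne : y t ^ 2 ≠ 0 := pow_ne_zero _ hYne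
    have hxev : (fun s => Real.sqrt (x s ^ 2)) =ᶠ[nhds t] x := by
      filter_upwards [hIo.mem_nhds ht] with s hs
      exact Real.sqrt_sq (hx s hs).le
    have hx' : HasDerivAt x
        ((2 * x t - x t ^ 2 / y t ^ 2 * (x t + 2 * τ t)) / (2 * x t)) t := by
      have h := ha.sqrt hx2ne
      rw [Real.sqrt_sq hX.le] at h
      exact h.congr_of_eventuallyEq hxev.symm
    have hyev : (fun s => Real.sqrt (y s ^ 2)) =ᶠ[nhds t] y := by
      filter_upwards [hIo.mem_nhds ht] with s hs
      exact Real.sqrt_sq (hy s hs).le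
    have hy' : HasDerivAt y ((x t + τ t) / (2 * y t)) t := by
      have h := hb.sqrt hy2ne
      rw [Real.sqrt_sq hY.le] at h
      exact h.congr_of_eventuallyEq hyev.symm
    have hx2 := hx'.pow 2
    have hy2 := hy'.pow 2
    have hy4 := hy'.pow 4
    have hnum := (((hy2.sub hx2).const_mul 2).mul hτ').sub
      ((hx'.const_mul (2 * lam)).mul hy4)
    have hdenD := hy2.mul (hx2.add (hy2.const_mul 2))
    have hu := hnum.div hdenD hden
    constructor
    · simp only [tt1V, tau1V, uV]
      have H := ((((hx2.const_mul 2).div hy2 hy2ne).neg).mul hτ').sub (hu.mul hx2)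
      refine H.congr_deriv ?_
      push_cast
      simp only [Pi.pow_apply, Pi.mul_apply, Pi.sub_apply, Pi.add_apply, Pi.div_apply, Pi.neg_apply]
      field_simp
      ring
    · simp only [tt2V, uV]
      have H := hτ'.sub (hu.mul hy2)
      refine H.congr_deriv ?_
      push_cast
      simp only [Pi.pow_apply, Pi.mul_apply, Pi.sub_apply, Pi.add_apply, Pi.div_apply, Pi.neg_apply]
      field_simp
      ring
  refine ⟨key, fun hlam => ?_⟩
  have hmono1 : StrictMonoOn (fun s => tt1V lam (x s) (y s) (τ s)) I := by
    refine strictMonoOn_of_deriv_pos hIc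
      (fun t ht => ((key t ht).1).continuousAt.continuousWithinAt) (fun t ht => ?_)
    rw [hIo.interior_eq] at ht
    rw [(key t ht).1.deriv]
    exact mul_pos hlam (pow_pos (hx t ht) 2)
  have hmono2 : StrictMonoOn (fun s => tt2V lam (x s) (y s) (τ s)) I := by
    refine strictMonoOn_of_deriv_pos hIc
      (fun t ht => ((key t ht).2).continuousAt.continuousWithinAt) (fun t ht => ?_)
    rw [hIo.interior_eq] at ht
    rw [(key t ht).2.deriv]
    exact mul_pos hlam (pow_pos (hy t ht) 2)
  refine ⟨hmono1, hmono2, ?_, ?_⟩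
  · intro s hs t ht hst hpos
    rcases hst.eq_or_lt with rfl | h
    · exact hpos
    · exact hpos.trans (hmono1 hs ht h)
  · intro s hs t ht hst hpos
    rcases hst.eq_or_lt with rfl | h
    · exact hpos
    · exact hpos.trans (hmono2 hs ht h)
end

section
/- Along any solution of the Sp(2)-invariant soliton ODE system, S satisfies S' = (2xy²/(x² + 2y²))(α(y/x) − βS), where α(l) = (1/12)(l² − 1)(2 + l⁻²)² and β = λ + (x⁴ + 12x²y² − 4y⁴)/(4x²y⁴) + ((4y² − x²)S)/(3x²y⁴). -/
/-- `S = y² − x² − (3/2)·x·τ₂`. -/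
noncomputable def SV (x y τ : ℝ) : ℝ := y ^ 2 - x ^ 2 - 3 / 2 * x * τ

/-- `α(l) = (1/12)(l² − 1)(2 + l⁻²)²`. -/
noncomputable def alphaF (l : ℝ) : ℝ := 1 / 12 * (l ^ 2 - 1) * (2 + l⁻¹ ^ 2) ^ 2

theorem stmt8 (lam : ℝ) (x y τ : ℝ → ℝ) (I : Set ℝ) (hIo : IsOpen I)
    (hx : ∀ t ∈ I, 0 < x t) (hy : ∀ t ∈ I, 0 < y t)
    (hsys : sp2System lam x y τ I) :
    ∀ t ∈ I,
      HasDerivAt (fun s => SV (x s) (y s) (τ s))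
        (2 * x t * y t ^ 2 / (x t ^ 2 + 2 * y t ^ 2) *
          (alphaF (y t / x t) -
            (lam + (x t ^ 4 + 12 * x t ^ 2 * y t ^ 2 - 4 * y t ^ 4) /
                (4 * x t ^ 2 * y t ^ 4)
              + (4 * y t ^ 2 - x t ^ 2) * SV (x t) (y t) (τ t) /
                (3 * x t ^ 2 * y t ^ 4)) *
            SV (x t) (y t) (τ t))) t := by
  intro t ht
  obtain ⟨hdx2, hdy2, hdτ⟩ := hsys t ht
  have hxt := hx t ht
  have hyt := hy t ht
  have hx0 : x t ≠ 0 := hxt.ne'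
  have hy0 : y t ≠ 0 := hyt.ne'
  have hx2 : x t ^ 2 ≠ 0 := pow_ne_zero _ hx0
  have hden : x t ^ 2 + 2 * y t ^ 2 ≠ 0 := by positivity
  -- derivative of x via sqrt of x²
  have hsq : HasDerivAt (fun s => Real.sqrt (x s ^ 2))
      ((2 * x t - x t ^ 2 / y t ^ 2 * (x t + 2 * τ t)) / (2 * Real.sqrt (x t ^ 2))) t :=
    hdx2.sqrt hx2
  have hEq : x =ᶠ[nhds t] (fun s => Real.sqrt (x s ^ 2)) := by
    filter_upwards [hIo.mem_nhds ht] with s hs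
    exact (Real.sqrt_sq (hx s hs).le).symm
  have hx' : HasDerivAt x
      ((2 * x t - x t ^ 2 / y t ^ 2 * (x t + 2 * τ t)) / (2 * x t)) t := by
    have := hsq.congr_of_eventuallyEq hEq
    rwa [Real.sqrt_sq hxt.le] at this
  have hD : HasDerivAt (fun s => y s ^ 2 - x s ^ 2 - 3 / 2 * (x s * τ s))
      ((x t + τ t) - (2 * x t - x t ^ 2 / y t ^ 2 * (x t + 2 * τ t)) -
        3 / 2 * ((2 * x t - x t ^ 2 / y t ^ 2 * (x t + 2 * τ t)) / (2 * x t) * τ t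
          + x t * (4 * (lam * x t * y t ^ 2 - 3 * τ t) *
          (y t ^ 2 - x t ^ 2 - 3 / 2 * x t * τ t) /
        (3 * x t * (x t ^ 2 + 2 * y t ^ 2))))) t :=
    (hdy2.sub hdx2).sub ((hx'.mul hdτ).const_mul (3 / 2))
  have hfun : (fun s => SV (x s) (y s) (τ s)) =
      fun s => y s ^ 2 - x s ^ 2 - 3 / 2 * (x s * τ s) := by
    funext s; simp [SV]; ring
  rw [hfun]
  convert hD using 1
  simp only [SV, alphaF]
  have hxy : (y t / x t)⁻¹ = x t / y t := by
    rw [inv_div]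
  rw [hxy]
  field_simp
  ring
end

section
/- Let x, y, S satisfy the closure system x' = ((x²+2y²)+4S)/(6y²), y' = ((x²+2y²)−2S)/(6xy) together with M = 3x + τ̃₁ and M' = ((y² + x²/2)/(xy²))M − 3x²/y². Then 3x'' = ((xy²)'·M)/(x·xy²) + ((1/y² − 1/x²)M − 9x/y² − 2λx)x'. In particular, at any critical point of x, x'' has the same sign as M. -/
theorem stmt11 (lam : ℝ) (x y S tt1 xd yd : ℝ → ℝ) (I : Set ℝ) (hIo : IsOpen I)
    (hx : ∀ t ∈ I, 0 < x t) (hy : ∀ t ∈ I, 0 < y t)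
    (hdx : ∀ t ∈ I, HasDerivAt x (xd t) t)
    (hdy : ∀ t ∈ I, HasDerivAt y (yd t) t)
    (hxd : ∀ t ∈ I,
      xd t = ((x t ^ 2 + 2 * y t ^ 2) + 4 * S t) / (6 * y t ^ 2))
    (hyd : ∀ t ∈ I,
      yd t = ((x t ^ 2 + 2 * y t ^ 2) - 2 * S t) / (6 * x t * y t))
    (htt1 : ∀ t ∈ I, HasDerivAt tt1 (lam * x t ^ 2) t)
    (hM : ∀ t ∈ I,
      3 * xd t + lam * x t ^ 2
        = (y t ^ 2 + x t ^ 2 / 2) / (x t * y t ^ 2) * (3 * x t + tt1 t)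
          - 3 * x t ^ 2 / y t ^ 2) :
    ∀ t ∈ I,
      HasDerivAt xd
        (1 / 3 * ((x t ^ 2 / 2 + y t ^ 2) * (3 * x t + tt1 t) /
            (x t * (x t * y t ^ 2))
          + ((1 / y t ^ 2 - 1 / x t ^ 2) * (3 * x t + tt1 t)
              - 9 * x t / y t ^ 2 - 2 * lam * x t) * xd t)) t ∧
      (xd t = 0 →
        (0 < 3 * x t + tt1 t →
          0 < 1 / 3 * ((x t ^ 2 / 2 + y t ^ 2) * (3 * x t + tt1 t) /
              (x t * (x t * y t ^ 2))
            + ((1 / y t ^ 2 - 1 / x t ^ 2) * (3 * x t + tt1 t)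
                - 9 * x t / y t ^ 2 - 2 * lam * x t) * xd t)) ∧
        (3 * x t + tt1 t < 0 →
          1 / 3 * ((x t ^ 2 / 2 + y t ^ 2) * (3 * x t + tt1 t) /
              (x t * (x t * y t ^ 2))
            + ((1 / y t ^ 2 - 1 / x t ^ 2) * (3 * x t + tt1 t)
                - 9 * x t / y t ^ 2 - 2 * lam * x t) * xd t) < 0)) := by

  intro t ht
  have hxt := hx t ht
  have hyt := hy t ht
  have hx0 : x t ≠ 0 := ne_of_gt hxt
  have hy0 : y t ≠ 0 := ne_of_gt hyt
  have Hx := hdx t ht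
  have Hy := hdy t ht
  have Ht := htt1 t ht
  have hMt := hM t ht
  have Hx2 : HasDerivAt (fun s => x s ^ 2) (2 * x t * xd t) t := by
    simpa [mul_comm] using Hx.fun_pow 2
  have Hy2 : HasDerivAt (fun s => y s ^ 2) (2 * y t * yd t) t := by
    simpa [mul_comm] using Hy.fun_pow 2
  have Hnum : HasDerivAt (fun s => y s ^ 2 + x s ^ 2 / 2)
      (2 * y t * yd t + 2 * x t * xd t / 2) t := Hy2.add (Hx2.div_const 2)
  have Hden : HasDerivAt (fun s => x s * y s ^ 2)
      (xd t * y t ^ 2 + x t * (2 * y t * yd t)) t := Hx.mul Hy2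
  have hden0 : x t * y t ^ 2 ≠ 0 := by positivity
  have hy20 : (y t ^ 2) ≠ 0 := by positivity
  have Hq := Hnum.div Hden hden0
  have HM : HasDerivAt (fun s => 3 * x s + tt1 s) (3 * xd t + lam * x t ^ 2) t :=
    (Hx.const_mul 3).add Ht
  have H1 := Hq.mul HM
  have H2 := (Hx2.const_mul 3).div Hy2 hy20
  have H3 := Hx2.const_mul lam
  have Hg := ((H1.sub H2).sub H3).const_mul (3 : ℝ)⁻¹
  have hev : xd =ᶠ[nhds t] (fun s =>
      (3 : ℝ)⁻¹ * ((y s ^ 2 + x s ^ 2 / 2) / (x s * y s ^ 2) * (3 * x s + tt1 s)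
        - 3 * x s ^ 2 / y s ^ 2 - lam * x s ^ 2)) := by
    filter_upwards [hIo.mem_nhds ht] with s hs
    have h := hM s hs
    have hxs : x s ≠ 0 := ne_of_gt (hx s hs)
    have hys : y s ≠ 0 := ne_of_gt (hy s hs)
    field_simp at h ⊢
    linarith
  have Hd := Hg.congr_of_eventuallyEq hev
  refine ⟨?_, ?_⟩
  · refine Hd.congr_deriv ?_
    rw [hMt, hxd t ht, hyd t ht]
    simp only [Pi.div_apply]
    field_simp
    ring
  intro h0
  rw [h0, mul_zero, add_zero]
  constructor
  · intro hMpos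
    have : 0 < (x t ^ 2 / 2 + y t ^ 2) * (3 * x t + tt1 t) / (x t * (x t * y t ^ 2)) :=
      div_pos (mul_pos (by positivity) hMpos) (by positivity)
    linarith
  · intro hMneg
    have : (x t ^ 2 / 2 + y t ^ 2) * (3 * x t + tt1 t) / (x t * (x t * y t ^ 2)) < 0 :=
      div_neg_of_neg_of_pos (mul_neg_of_pos_of_neg (by positivity) hMneg) (by positivity)
    linarith
end

section
/- For λ < 0, the planar system α' = −2λβ(α + 2/3) + α(1 + 2α)/(2β), β' = 2(α + 3/4) on {β > 0} has a unique fixed point, located at (α, β) = (−3/4, √(−9/(8λ))), and the linearisation there has eigenvalues (5√(−2λ) ± √(46λ))/12, a complex conjugate pair with positive real part. -/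
open Matrix

theorem stmt15 (lam : ℝ) (hlam : lam < 0) :
    (∀ α β : ℝ, 0 < β →
      ((-2 * lam * β * (α + 2 / 3) + α * (1 + 2 * α) / (2 * β) = 0 ∧
          2 * (α + 3 / 4) = 0) ↔
        (α = -3 / 4 ∧ β = Real.sqrt (-9 / (8 * lam))))) ∧
    (∀ z : ℂ,
      (z = (5 * Real.sqrt (-2 * lam) : ℝ) / 12
            + ((Real.sqrt (-46 * lam) : ℝ) / 12) * Complex.I ∨
       z = (5 * Real.sqrt (-2 * lam) : ℝ) / 12
            - ((Real.sqrt (-46 * lam) : ℝ) / 12) * Complex.I) →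
      Matrix.det (z • (1 : Matrix (Fin 2) (Fin 2) ℂ) -
        !![((5 / 6 * Real.sqrt (-2 * lam) : ℝ) : ℂ), ((lam / 3 : ℝ) : ℂ);
           (2 : ℂ), (0 : ℂ)]) = 0) ∧
    (0 < (5 * Real.sqrt (-2 * lam)) / 12 ∧ 0 < Real.sqrt (-46 * lam) / 12 ∧
      (starRingEnd ℂ)
          ((5 * Real.sqrt (-2 * lam) : ℝ) / 12
            + ((Real.sqrt (-46 * lam) : ℝ) / 12) * Complex.I)
        = (5 * Real.sqrt (-2 * lam) : ℝ) / 12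
            - ((Real.sqrt (-46 * lam) : ℝ) / 12) * Complex.I) := by
  have h9 : (0:ℝ) < -9 / (8 * lam) :=
    div_pos_of_neg_of_neg (by norm_num) (by linarith)
  have hs : Real.sqrt (-9 / (8 * lam)) ^ 2 = -9 / (8 * lam) :=
    Real.sq_sqrt h9.le
  have h2 : (0:ℝ) < -2 * lam := by linarith
  have h46 : (0:ℝ) < -46 * lam := by linarith
  have hs2 : Real.sqrt (-2 * lam) ^ 2 = -2 * lam := Real.sq_sqrt h2.le
  have hs46 : Real.sqrt (-46 * lam) ^ 2 = -46 * lam := Real.sq_sqrt h46.le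
  refine ⟨?_, ?_, ?_, ?_, ?_⟩
  · intro α β hβ
    constructor
    · rintro ⟨h1, h2'⟩
      have hα : α = -3 / 4 := by linarith
      subst hα
      have hβ2 : β ^ 2 = -9 / (8 * lam) := by
        field_simp at h1
        rw [eq_div_iff (by intro h; nlinarith : (8:ℝ) * lam ≠ 0)]
        linear_combination (1 / 2 : ℝ) * h1
      refine ⟨rfl, ?_⟩
      rw [← hβ2, Real.sqrt_sq hβ.le]
    · rintro ⟨hα, hβ'⟩
      subst hα; subst hβ'
      refine ⟨?_, by ring⟩
      have hβne : Real.sqrt (-9 / (8 * lam)) ≠ 0 := ne_of_gt hβ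
      have hlamne : lam ≠ 0 := ne_of_lt hlam
      have hs' : lam * Real.sqrt (-9 / (8 * lam)) ^ 2 = -9 / 8 := by
        rw [hs]; field_simp
      generalize Real.sqrt (-9 / (8 * lam)) = s at hβne hs' ⊢
      field_simp
      linear_combination (16 : ℝ) * hs'
  · intro z hz
    have hdet : Matrix.det (z • (1 : Matrix (Fin 2) (Fin 2) ℂ) -
        !![((5 / 6 * Real.sqrt (-2 * lam) : ℝ) : ℂ), ((lam / 3 : ℝ) : ℂ);
           (2 : ℂ), (0 : ℂ)]) =
        z ^ 2 - ((5 / 6 * Real.sqrt (-2 * lam) : ℝ) : ℂ) * z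
          - 2 * ((lam / 3 : ℝ) : ℂ) := by
      simp [Matrix.det_fin_two, Matrix.smul_apply, Matrix.one_apply]
      ring
    rw [hdet]
    have e2 : ((Real.sqrt (-2 * lam) : ℝ) : ℂ) ^ 2 = ((-2 * lam : ℝ) : ℂ) := by
      rw [← Complex.ofReal_pow, hs2]
    have e46 : ((Real.sqrt (-46 * lam) : ℝ) : ℂ) ^ 2 = ((-46 * lam : ℝ) : ℂ) := by
      rw [← Complex.ofReal_pow, hs46]
    rcases hz with hz | hz <;> subst hz <;>
    · push_cast
      push_cast at e2 e46
      linear_combination (-(25:ℂ)/144) * e2 + ((-1:ℂ)/144) * e46 +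
        (((Real.sqrt (-46*lam) : ℝ) : ℂ)^2/144) * Complex.I_sq
  · have := Real.sqrt_pos.mpr h2
    positivity
  · have := Real.sqrt_pos.mpr h46
    positivity
  · simp only [map_add, _root_.map_mul, map_div₀, _root_.map_one, Complex.conj_ofReal, Complex.conj_I,
      map_ofNat]
    ring
end

section
/- For λ < 0 and any solution (α, β) of the planar system α' = −2λβ(α + 2/3) + α(1 + 2α)/(2β), β' = 2(α + 3/4), if β < β* := √(−9/(8λ)) and −3/4 < α < −21/32, then (8β*α − 5β)' > 0. -/
theorem stmt16 (lam βstar : ℝ) (hlam : lam < 0)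
    (hβstar : βstar = Real.sqrt (-9 / (8 * lam)))
    (α β : ℝ → ℝ) (t : ℝ) (hβpos : 0 < β t)
    (hα : HasDerivAt α
      (-2 * lam * β t * (α t + 2 / 3) + α t * (1 + 2 * α t) / (2 * β t)) t)
    (hβ : HasDerivAt β (2 * (α t + 3 / 4)) t)
    (h1 : β t < βstar) (h2 : -3 / 4 < α t) (h3 : α t < -21 / 32) :
    HasDerivAt (fun s => 8 * βstar * α s - 5 * β s)
      (8 * βstar *
          (-2 * lam * β t * (α t + 2 / 3) + α t * (1 + 2 * α t) / (2 * β t))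
        - 5 * (2 * (α t + 3 / 4))) t ∧
    0 < 8 * βstar *
          (-2 * lam * β t * (α t + 2 / 3) + α t * (1 + 2 * α t) / (2 * β t))
        - 5 * (2 * (α t + 3 / 4)) := by
  have hB : 0 < βstar := lt_trans hβpos h1
  have h8 : (8 : ℝ) * lam ≠ 0 := by nlinarith
  have harg : 0 ≤ -9 / (8 * lam) :=
    div_nonneg_iff.mpr (Or.inr ⟨by norm_num, by linarith⟩)
  have hB2 : 8 * lam * βstar ^ 2 = -9 := by
    rw [hβstar, Real.sq_sqrt harg]
    have hl : lam ≠ 0 := hlam.ne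
    field_simp
  constructor
  · exact (hα.const_mul (8 * βstar)).sub (hβ.const_mul 5)
  · set A := α t with hA
    set b := β t with hb
    set B := βstar with hBdef
    have key : 8 * B *
          (-2 * lam * b * (A + 2 / 3) + A * (1 + 2 * A) / (2 * b))
        - 5 * (2 * (A + 3 / 4)) =
        (8 * B * (-2 * lam * b * (A + 2 / 3)) * (2 * b)
          + 8 * B * (A * (1 + 2 * A)) - 5 * (2 * (A + 3 / 4)) * (2 * b))
          / (2 * b) := by
      field_simp
    rw [key]
    apply div_pos _ (by linarith)
    set N := 8 * B * (-2 * lam * b * (A + 2 / 3)) * (2 * b)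
          + 8 * B * (A * (1 + 2 * A)) - 5 * (2 * (A + 3 / 4)) * (2 * b) with hN
    have hNB : 0 < N * B := by
      have hA43 : 0 < 4 * A + 3 := by linarith
      have hA12 : 0 < A * (1 + 2 * A) := by nlinarith
      have hT3 : 0 < b * B * (4 * A + 3) ^ 2 :=
        mul_pos (mul_pos hβpos hB) (by positivity)
      rcases le_or_gt (A + 2 / 3) 0 with h | h
      · -- N*B = 36(A+2/3)*b*(b-B) + 8A(1+2A)B(B-b) + bB(4A+3)^2
        have hT1 : 0 ≤ 36 * (-(A + 2 / 3)) * b * (B - b) := by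
          apply mul_nonneg
          apply mul_nonneg
          · apply mul_nonneg (by norm_num) (by linarith)
          · exact hβpos.le
          · linarith
        have hT2 : 0 < 8 * (A * (1 + 2 * A)) * B * (B - b) := by
          apply mul_pos (mul_pos (by linarith) hB) (by linarith)
        have hid : N * B = 36 * (-(A + 2 / 3)) * b * (B - b)
            + 8 * (A * (1 + 2 * A)) * B * (B - b) + b * B * (4 * A + 3) ^ 2 := by
          rw [hN]
          linear_combination (-4 * (A + 2 / 3) * b ^ 2) * hB2
        rw [hid]; linarith
      · -- N*B = 36(A+2/3)(B-b)^2 + (B-b)B(16A^2-28A-24) + bB(4A+3)^2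
        have hT1 : 0 ≤ 36 * (A + 2 / 3) * (B - b) ^ 2 := by positivity
        have hq : 0 < 16 * A ^ 2 - 28 * A - 24 := by
          nlinarith [mul_pos (by linarith : (0:ℝ) < -A) (by linarith : (0:ℝ) < -21 / 32 - A)]
        have hT2 : 0 < (B - b) * B * (16 * A ^ 2 - 28 * A - 24) :=
          mul_pos (mul_pos (by linarith) hB) hq
        have hid : N * B = 36 * (A + 2 / 3) * (B - b) ^ 2
            + (B - b) * B * (16 * A ^ 2 - 28 * A - 24) + b * B * (4 * A + 3) ^ 2 := by
          rw [hN]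
          linear_combination (-4 * (A + 2 / 3) * b ^ 2) * hB2
        rw [hid]; linarith
    nlinarith [hNB, hB]
end

section
/- For λ < 0, the vector field V(α, β) = (−2λβ(α + 2/3) + α(1 + 2α)/(2β), 2(α + 3/4)) on {β > 0} has divergence div V = (1 + 4α − 4λβ²)/(2β); consequently div V > 0 whenever α ≥ −1 and −λβ² > 4/5, and hence any simply connected region contained in that set contains no nontrivial closed orbits of V. -/
/-- Positivity of the derivative of the Lyapunov function along the flow. -/
lemma stmt17_aux_pos (m B x y : ℝ) (hm : 0 < m) (hB : 0 < B) (hB2 : 8*m*B^2 = 9)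
    (hy : 0 < y) (hx : -1 ≤ x) (hreg : 4/5 < m*y^2) :
    0 ≤ 48*(x+3/4)^2*(5*B*(x+3/4) + 10*m*B*y^2 - 4*B - 3*y) + (y-B)*(8*m*y^2-9) ∧
    (48*(x+3/4)^2*(5*B*(x+3/4) + 10*m*B*y^2 - 4*B - 3*y) + (y-B)*(8*m*y^2-9) = 0
      → x = -3/4 ∧ y = B) := by
  have key1 : 45*y^2 > 32*B^2 := by nlinarith
  have hE4B : 0 < 45*y^2 - 12*y*B - 21*B^2 := by nlinarith [sq_nonneg (3*y - 2*B)]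
  have hE : 0 < 10*m*B*y^2 - 3*y - 21*B/4 := by nlinarith
  have hSA : 0 < 5*B*(x+3/4) + 10*m*B*y^2 - 4*B - 3*y := by nlinarith
  have h2eq : (y-B)*(8*m*y^2-9) = 8*m*(y-B)^2*(y+B) := by linear_combination (y - B) * hB2
  have h2 : 0 ≤ (y-B)*(8*m*y^2-9) := by rw [h2eq]; positivity
  have h1 : 0 ≤ 48*(x+3/4)^2*(5*B*(x+3/4) + 10*m*B*y^2 - 4*B - 3*y) := by positivity
  refine ⟨by linarith, fun h0 => ?_⟩
  have hA : (48*(x+3/4)^2)*(5*B*(x+3/4) + 10*m*B*y^2 - 4*B - 3*y) = 0 := by linarith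
  have hxx : x + 3/4 = 0 := by
    rcases mul_eq_zero.mp hA with h | h
    · have h' : (x+3/4)^2 = 0 := by linarith [sq_nonneg (x+3/4)]
      exact sq_eq_zero_iff.mp h'
    · exact absurd h (ne_of_gt hSA)
  have hyy : y - B = 0 := by
    have hz : (8*m*(y-B)^2)*(y+B) = 0 := by
      have := h2eq
      nlinarith [h0, hxx]
    rcases mul_eq_zero.mp hz with h | h
    · have h8 : (y-B)^2 = 0 := by
        rcases mul_eq_zero.mp h with h' | h'
        · linarith
        · exact h'
      exact sq_eq_zero_iff.mp h8
    · linarith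
  exact ⟨by linarith, by linarith⟩

/-- The derivative of the Lyapunov function along solutions. -/
lemma stmt17_aux_deriv (lam B : ℝ) (X Y : ℝ → ℝ) (t : ℝ) (hy0 : 0 < Y t)
    (hx : HasDerivAt X (-2*lam*(Y t)*((X t)+2/3) + (X t)*(1+2*(X t))/(2*(Y t))) t)
    (hy : HasDerivAt Y (2*((X t)+3/4)) t) :
    HasDerivAt (fun u => 5*B/2*(X u + 3/4)^2 - (Y u - B)*(X u + 3/4)
        + (-lam)/3*(Y u)^3 - 7/24*(-lam)*B*(Y u)^2 - (Y u)/2 + B/32*Real.log (Y u))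
      ((48*(X t+3/4)^2*(5*B*(X t+3/4) + 10*(-lam)*B*(Y t)^2 - 4*B - 3*(Y t))
          + (Y t - B)*(8*(-lam)*(Y t)^2 - 9)) / (48*(Y t))) t := by
  have hy' : Y t ≠ 0 := ne_of_gt hy0
  have hX : HasDerivAt (fun u => X u + 3/4)
      (-2*lam*(Y t)*((X t)+2/3) + (X t)*(1+2*(X t))/(2*(Y t))) t := hx.add_const _
  have T1 := (hX.pow 2).const_mul (5*B/2)
  have T2 := (hy.sub_const B).mul hX
  have T3 := (hy.pow 3).const_mul ((-lam)/3)
  have T4 := (hy.pow 2).const_mul (7/24*(-lam)*B)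
  have T5 := hy.div_const 2
  have T6 : HasDerivAt (fun u => B/32*Real.log (Y u))
      (B/32 * ((Y t)⁻¹ * (2*((X t)+3/4)))) t := by
    simpa [Function.comp] using
      ((Real.hasDerivAt_log hy').comp t hy).const_mul (B/32)
  have Total := ((((T1.sub T2).add T3).sub T4).sub T5).add T6
  convert Total using 1
  · rfl
  · rfl
  · rfl
  field_simp
  ring

theorem stmt17 (lam : ℝ) (hlam : lam < 0) :
    (∀ a b : ℝ, 0 < b →
      deriv (fun a' => -2 * lam * b * (a' + 2 / 3) + a' * (1 + 2 * a') / (2 * b)) a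
          + deriv (fun _b' => (2 * (a + 3 / 4) : ℝ)) b
        = (1 + 4 * a - 4 * lam * b ^ 2) / (2 * b)) ∧
    (∀ a b : ℝ, 0 < b → -1 ≤ a → 4 / 5 < -lam * b ^ 2 →
      0 < (1 + 4 * a - 4 * lam * b ^ 2) / (2 * b)) ∧
    (∀ U : Set (ℝ × ℝ), IsOpen U → SimplyConnectedSpace U →
      (∀ p ∈ U, 0 < p.2 ∧ -1 ≤ p.1 ∧ 4 / 5 < -lam * p.2 ^ 2) →
      ∀ γ : ℝ → ℝ × ℝ, (∀ t, γ t ∈ U) →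
      (∀ t, HasDerivAt γ
        (-2 * lam * (γ t).2 * ((γ t).1 + 2 / 3)
            + (γ t).1 * (1 + 2 * (γ t).1) / (2 * (γ t).2),
         2 * ((γ t).1 + 3 / 4)) t) →
      ∀ T : ℝ, 0 < T → Function.Periodic γ T →
      ∀ s t : ℝ, γ s = γ t) := by
  refine ⟨?_, ?_, ?_⟩
  · -- divergence computation
    intro a b hb
    have h1 : HasDerivAt (fun a' : ℝ => -2 * lam * b * (a' + 2 / 3) + a' * (1 + 2 * a') / (2 * b))
        (-2*lam*b + (1+4*a)/(2*b)) a := by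
      have h2 : HasDerivAt (fun a' : ℝ => a' + 2/3) 1 a := (hasDerivAt_id a).add_const _
      have h3 : HasDerivAt (fun a' : ℝ => 1 + 2*a') 2 a := by
        simpa using ((hasDerivAt_id a).const_mul (2:ℝ)).const_add (1:ℝ)
      have h4 := ((hasDerivAt_id a).mul h3).div_const (2*b)
      have h5 := h2.const_mul (-2*lam*b)
      convert h5.add h4 using 1
      · rfl
      · rfl
      · rfl
      have hb' : b ≠ 0 := ne_of_gt hb
      field_simp
      simp only [id_eq]
      ring
    rw [h1.deriv, deriv_const]
    have hb' : b ≠ 0 := ne_of_gt hb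
    field_simp
    ring
  · -- positivity of the divergence
    intro a b hb ha h2
    apply div_pos _ (by linarith)
    nlinarith
  · -- no nontrivial closed orbits
    intro U hUo hUsc hU γ hγU hγ T hT hper s t
    have hm : (0:ℝ) < -lam := by linarith
    obtain ⟨B, hB, hB2⟩ : ∃ B : ℝ, 0 < B ∧ 8*(-lam)*B^2 = 9 := by
      refine ⟨Real.sqrt (9/(8*(-lam))), Real.sqrt_pos.mpr (by positivity), ?_⟩
      have hl0 : lam ≠ 0 := ne_of_lt hlam
      rw [Real.sq_sqrt (by positivity : (0:ℝ) ≤ 9/(8*(-lam)))]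
      field_simp
    have hmem : ∀ u, 0 < (γ u).2 ∧ -1 ≤ (γ u).1 ∧ 4/5 < (-lam)*(γ u).2^2 := by
      intro u
      obtain ⟨a1, a2, a3⟩ := hU _ (hγU u)
      exact ⟨a1, a2, a3⟩
    -- component derivatives
    have hx : ∀ u, HasDerivAt (fun v => (γ v).1)
        (-2*lam*(γ u).2*((γ u).1+2/3) + (γ u).1*(1+2*(γ u).1)/(2*(γ u).2)) u := by
      intro u
      simpa using (hγ u).hasFDerivAt.fst.hasDerivAt
    have hy : ∀ u, HasDerivAt (fun v => (γ v).2) (2*((γ u).1+3/4)) u := by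
      intro u
      simpa using (hγ u).hasFDerivAt.snd.hasDerivAt
    -- the Lyapunov function along the curve and its derivative
    set φ : ℝ → ℝ := fun u => 5*B/2*((γ u).1 + 3/4)^2 - ((γ u).2 - B)*((γ u).1 + 3/4)
        + (-lam)/3*((γ u).2)^3 - 7/24*(-lam)*B*((γ u).2)^2 - ((γ u).2)/2
        + B/32*Real.log ((γ u).2) with hφdef
    set D : ℝ → ℝ := fun u =>
      (48*((γ u).1+3/4)^2*(5*B*((γ u).1+3/4) + 10*(-lam)*B*((γ u).2)^2 - 4*B - 3*((γ u).2))
          + ((γ u).2 - B)*(8*(-lam)*((γ u).2)^2 - 9)) / (48*((γ u).2)) with hDdef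
    have hφ : ∀ u, HasDerivAt φ (D u) u := fun u =>
      stmt17_aux_deriv lam B (fun v => (γ v).1) (fun v => (γ v).2) u
        (hmem u).1 (hx u) (hy u)
    have hDnn : ∀ u, 0 ≤ D u := by
      intro u
      obtain ⟨a1, a2, a3⟩ := hmem u
      exact div_nonneg
        (stmt17_aux_pos (-lam) B (γ u).1 (γ u).2 hm hB hB2 a1 a2 a3).1
        (by positivity)
    have hmono : Monotone φ :=
      monotone_of_deriv_nonneg (fun u => (hφ u).differentiableAt)
        (fun u => by rw [(hφ u).deriv]; exact hDnn u)
    have hφper : ∀ u, φ (u + T) = φ u := by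
      intro u
      simp only [hφdef, hper u]
    have hφpern : ∀ (n : ℕ) (u : ℝ), φ (u + n * T) = φ u := by
      intro n
      induction n with
      | zero => intro u; norm_num
      | succ k ih =>
        intro u
        have : u + ((k:ℝ) + 1) * T = (u + T) + (k:ℝ) * T := by ring
        rw [Nat.cast_succ, this, ih (u + T), hφper u]
    have hconst : ∀ u v : ℝ, φ u = φ v := by
      have key : ∀ u v : ℝ, u ≤ v → φ u = φ v := by
        intro u v huv
        obtain ⟨n, hn⟩ := exists_nat_ge ((v - u) / T)
        have hvn : v ≤ u + n * T := by
          have := (div_le_iff₀ hT).mp hn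
          linarith
        exact le_antisymm (hmono huv) (by
          calc φ v ≤ φ (u + n * T) := hmono hvn
          _ = φ u := hφpern n u)
      intro u v
      rcases le_total u v with h | h
      · exact key u v h
      · exact (key v u h).symm
    have hD0 : ∀ u, D u = 0 := by
      intro u
      have h1 : deriv φ u = D u := (hφ u).deriv
      have h2 : φ = fun _ => φ 0 := funext fun v => hconst v 0
      rw [h2, deriv_const] at h1
      exact h1.symm
    have hfix : ∀ u, γ u = (-3/4, B) := by
      intro u
      obtain ⟨a1, a2, a3⟩ := hmem u
      have hnum : 48*((γ u).1+3/4)^2*(5*B*((γ u).1+3/4)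
            + 10*(-lam)*B*((γ u).2)^2 - 4*B - 3*((γ u).2))
          + ((γ u).2 - B)*(8*(-lam)*((γ u).2)^2 - 9) = 0 := by
        have := hD0 u
        rw [hDdef] at this
        have h48 : (48:ℝ)*((γ u).2) ≠ 0 := by positivity
        field_simp at this
        linarith [this]
      obtain ⟨e1, e2⟩ :=
        (stmt17_aux_pos (-lam) B (γ u).1 (γ u).2 hm hB hB2 a1 a2 a3).2 hnum
      exact Prod.ext e1 e2
    rw [hfix s, hfix t]
end

section
/- Let ν > 1, a ∈ ℝ, and suppose f : [t₀, ∞) → ℝ is differentiable with t^ν f'(t) → a as t → ∞. Then f has a finite limit f_∞ at infinity, and t^{ν−1}(f(t) − f_∞) → a/(1 − ν) as t → ∞. -/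
open Filter MeasureTheory Set

theorem stmt18 (ν a t₀ : ℝ) (hν : 1 < ν) (f : ℝ → ℝ)
    (hf : ∀ t ∈ Set.Ici t₀, DifferentiableAt ℝ f t)
    (h : Tendsto (fun t => t ^ ν * deriv f t) atTop (nhds a)) :
    ∃ L : ℝ, Tendsto f atTop (nhds L) ∧
      Tendsto (fun t => t ^ (ν - 1) * (f t - L)) atTop (nhds (a / (1 - ν))) := by
  -- get a bound |deriv f t| ≤ (|a|+1) * t^(-ν) eventually
  have hbound : ∀ᶠ t in atTop, |t ^ ν * deriv f t| ≤ |a| + 1 :=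
    h.abs.eventually (eventually_le_nhds (show |a| < |a| + 1 by linarith))
  obtain ⟨T, hT⟩ := ((hbound.and (eventually_ge_atTop (max t₀ 1))).and
    (eventually_gt_atTop 0)).exists_forall_of_atTop
  have hTpos : 0 < T := (hT T le_rfl).2
  have hTt₀ : t₀ ≤ T := le_trans (le_max_left _ _) (hT T le_rfl).1.2
  have key : ∀ t, T ≤ t → |deriv f t| ≤ (|a| + 1) * t ^ (-ν) := by
    intro t ht
    obtain ⟨⟨h1, _⟩, h3⟩ := hT t ht
    have htpos : 0 < t := h3
    have heq : |deriv f t| = |t ^ ν * deriv f t| * t ^ (-ν) := by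
      rw [abs_mul, abs_of_pos (Real.rpow_pos_of_pos htpos ν), mul_comm (t ^ ν),
        mul_assoc, ← Real.rpow_add htpos]
      simp
    rw [heq]
    exact mul_le_mul_of_nonneg_right h1 (Real.rpow_pos_of_pos htpos _).le
  -- integrability of deriv f on Ioi T
  have hmeas : Measurable (deriv f) := measurable_deriv f
  have hint : IntegrableOn (deriv f) (Ioi T) := by
    have hmaj : IntegrableOn (fun t => (|a| + 1) * t ^ (-ν)) (Ioi T) :=
      (integrableOn_Ioi_rpow_of_lt (by linarith) hTpos).const_mul _
    refine Integrable.mono hmaj hmeas.aestronglyMeasurable ?_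
    filter_upwards [ae_restrict_mem measurableSet_Ioi] with t ht
    have := key t (le_of_lt ht)
    have htpos : (0:ℝ) < t := lt_trans hTpos ht
    rwa [Real.norm_eq_abs, Real.norm_eq_abs, abs_of_nonneg
      (by positivity : (0:ℝ) ≤ (|a| + 1) * t ^ (-ν))]
  -- FTC representation
  have hftc : ∀ t, T ≤ t → f t = f T + ∫ x in T..t, deriv f x := by
    intro t ht
    have hii : IntervalIntegrable (deriv f) volume T t := by
      rw [intervalIntegrable_iff]
      exact hint.mono_set (by rw [uIoc_of_le ht]; exact Ioc_subset_Ioi_self)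
    have : ∫ x in T..t, deriv f x = f t - f T := by
      apply intervalIntegral.integral_eq_sub_of_hasDerivAt _ hii
      intro x hx
      rw [uIcc_of_le ht] at hx
      exact (hf x (le_trans hTt₀ hx.1)).hasDerivAt
    rw [this]; ring
  -- the limit L
  set L : ℝ := f T + ∫ x in Ioi T, deriv f x with hL
  have hfL : Tendsto f atTop (nhds L) := by
    have h1 : Tendsto (fun t => f T + ∫ x in T..t, deriv f x) atTop (nhds L) :=
      (intervalIntegral_tendsto_integral_Ioi T hint tendsto_id).const_add (f T)
    refine h1.congr' ?_
    filter_upwards [eventually_ge_atTop T] with t ht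
    exact (hftc t ht).symm
  refine ⟨L, hfL, ?_⟩
  -- L'Hôpital
  have hdiv : Tendsto (fun t : ℝ => (f t - L) / t ^ (1 - ν)) atTop (nhds (a / (1 - ν))) := by
    apply HasDerivAt.lhopital_zero_atTop (f' := deriv f)
      (g' := fun t : ℝ => (1 - ν) * t ^ (1 - ν - 1))
    · filter_upwards [eventually_ge_atTop t₀] with t ht
      exact ((hf t ht).hasDerivAt).sub_const L
    · filter_upwards [eventually_gt_atTop (0:ℝ)] with t ht
      exact Real.hasDerivAt_rpow_const (Or.inl (ne_of_gt ht))
    · filter_upwards [eventually_gt_atTop (0:ℝ)] with t ht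
      exact mul_ne_zero (by linarith) (ne_of_gt (Real.rpow_pos_of_pos ht _))
    · simpa using hfL.sub_const L
    · have := tendsto_rpow_neg_atTop (show (0:ℝ) < ν - 1 by linarith)
      convert this using 2 with t
      ring_nf
    · have := h.div_const (1 - ν)
      refine this.congr' ?_
      filter_upwards [eventually_gt_atTop (0:ℝ)] with t ht
      have h1 : (1 : ℝ) - ν - 1 = -ν := by ring
      have hν0 : t ^ ν ≠ 0 := ne_of_gt (Real.rpow_pos_of_pos ht ν)
      rw [h1, Real.rpow_neg ht.le]
      field_simp
  refine hdiv.congr' ?_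
  filter_upwards [eventually_gt_atTop (0:ℝ)] with t ht
  rw [div_eq_mul_inv, ← Real.rpow_neg ht.le, mul_comm]
  ring_nf
end

section
/- Suppose x(t) = c₁t + o(t), y(t) = c₂t + o(t), and S(t) → S* as t → ∞, where x, y, S satisfy x' = 1/3 + x²/(6y²) + 2S/(3y²) and (x/y)' = S/y³, with c₁, c₂ > 0. Then x/y = (c₁/c₂)(1 − (S*/(2c₁c₂²))t⁻² + o(t⁻²)), and x'(t) = c₁ − ξS*t⁻² + o(t⁻²) with ξ = (c₁² − 4c₂²)/(18c₁c₂⁴); hence, after a translation in t, x(t) = c₁t + ξS*t⁻¹ + o(t⁻¹). -/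
open Filter

lemma monoOn_of_hasDerivAt_nonneg {u u' : ℝ → ℝ} {T : ℝ}
    (hu : ∀ t ∈ Set.Ici T, HasDerivAt u (u' t) t)
    (hu' : ∀ t ∈ Set.Ici T, 0 ≤ u' t) : MonotoneOn u (Set.Ici T) := by
  apply monotoneOn_of_deriv_nonneg (convex_Ici T)
  · exact fun t ht => (hu t ht).continuousAt.continuousWithinAt
  · intro t ht
    rw [interior_Ici] at ht
    exact (hu t (Set.Ioi_subset_Ici_self ht)).differentiableAt.differentiableWithinAt
  · intro t ht
    rw [interior_Ici] at ht
    rw [(hu t (Set.Ioi_subset_Ici_self ht)).deriv]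
    exact hu' t (Set.Ioi_subset_Ici_self ht)

lemma abs_sub_le_of_deriv_bound {f f' g g' : ℝ → ℝ} {T : ℝ}
    (hf : ∀ t ∈ Set.Ici T, HasDerivAt f (f' t) t)
    (hg : ∀ t ∈ Set.Ici T, HasDerivAt g (g' t) t)
    (hle : ∀ t ∈ Set.Ici T, |f' t| ≤ g' t) :
    ∀ s t : ℝ, T ≤ s → s ≤ t → |f t - f s| ≤ g t - g s := by
  have h1 : MonotoneOn (fun t => g t - f t) (Set.Ici T) :=
    monoOn_of_hasDerivAt_nonneg (u' := fun t => g' t - f' t)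
      (fun t ht => (hg t ht).sub (hf t ht))
      (fun t ht => by have := (abs_le.1 (hle t ht)).2; show (0:ℝ) ≤ g' t - f' t; linarith)
  have h2 : MonotoneOn (fun t => g t + f t) (Set.Ici T) :=
    monoOn_of_hasDerivAt_nonneg (u' := fun t => g' t + f' t)
      (fun t ht => (hg t ht).add (hf t ht))
      (fun t ht => by have := (abs_le.1 (hle t ht)).1; show (0:ℝ) ≤ g' t + f' t; linarith)
  intro s t hs hst
  have hT : t ∈ Set.Ici T := le_trans hs hst
  have e1 := h1 (Set.mem_Ici.2 hs) hT hst
  have e2 := h2 (Set.mem_Ici.2 hs) hT hst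
  simp only at e1 e2
  rw [abs_sub_le_iff]
  constructor <;> linarith

lemma asymp_integration {n : ℕ} (hn : 2 ≤ n) {a T₀ : ℝ} {f f' : ℝ → ℝ}
    (hf : ∀ t ∈ Set.Ici T₀, HasDerivAt f (f' t) t)
    (hlim : Tendsto (fun t => t ^ n * f' t) atTop (nhds a)) :
    ∃ L, Tendsto f atTop (nhds L) ∧
      Tendsto (fun t => t ^ (n - 1) * (f t - L)) atTop (nhds (a / (1 - n))) := by
  have hnR : (2:ℝ) ≤ (n:ℝ) := by exact_mod_cast hn
  have hden : (1:ℝ) - n < 0 := by linarith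
  have hdne : (1:ℝ) - n ≠ 0 := ne_of_lt hden
  set φ : ℝ → ℝ := fun t => t ^ (1 - (n:ℤ)) / (1 - (n:ℝ)) with hφdef
  have hφd : ∀ t : ℝ, 0 < t → HasDerivAt φ (t ^ (-(n:ℤ))) t := by
    intro t ht
    have h := (hasDerivAt_zpow (1 - (n:ℤ)) t (Or.inl (ne_of_gt ht))).div_const (1 - (n:ℝ))
    refine h.congr_deriv ?_; symm
    rw [show (1 - (n:ℤ)) - 1 = -(n:ℤ) by ring]
    push_cast
    rw [mul_comm, mul_div_assoc, div_self hdne, mul_one]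
  have hφneg : ∀ t : ℝ, 0 < t → φ t ≤ 0 := fun t ht =>
    div_nonpos_of_nonneg_of_nonpos (le_of_lt (zpow_pos ht _)) (le_of_lt hden)
  have hφmono : MonotoneOn φ (Set.Ici (1:ℝ)) :=
    monoOn_of_hasDerivAt_nonneg (u' := fun t => t ^ (-(n:ℤ)))
      (fun t ht => hφd t (lt_of_lt_of_le zero_lt_one ht))
      (fun t ht => le_of_lt (zpow_pos (lt_of_lt_of_le zero_lt_one ht) _))
  have hφ0 : Tendsto φ atTop (nhds 0) := by
    have h1 : Tendsto (fun t : ℝ => t ^ (1 - (n:ℤ))) atTop (nhds 0) :=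
      tendsto_zpow_atTop_zero (by omega)
    simpa using h1.div_const (1 - (n:ℝ))
  have main : ∀ ε : ℝ, 0 < ε → ∃ T : ℝ, (1 ≤ T ∧ T₀ ≤ T) ∧
      ∀ s t : ℝ, T ≤ s → s ≤ t →
        |(f t - a * φ t) - (f s - a * φ s)| ≤ ε * (φ t - φ s) := by
    intro ε hε
    have hev : ∀ᶠ t in atTop, |t ^ n * f' t - a| ≤ ε := by
      have := Metric.tendsto_nhds.1 hlim ε hε
      filter_upwards [this] with t ht
      rw [Real.dist_eq] at ht; exact ht.le
    obtain ⟨N, hN⟩ := eventually_atTop.1 hev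
    refine ⟨max N (max 1 T₀),
      ⟨le_max_of_le_right (le_max_left _ _), le_max_of_le_right (le_max_right _ _)⟩, ?_⟩
    have hfacts : ∀ t : ℝ, max N (max 1 T₀) ≤ t → (0 < t ∧ T₀ ≤ t ∧ N ≤ t) := by
      intro t ht
      refine ⟨lt_of_lt_of_le zero_lt_one (le_trans (le_trans (le_max_left _ _) (le_max_right _ _)) ht),
        le_trans (le_trans (le_max_right _ _) (le_max_right _ _)) ht,
        le_trans (le_max_left _ _) ht⟩
    have H := abs_sub_le_of_deriv_bound (T := max N (max 1 T₀))
      (f := fun t => f t - a * φ t) (f' := fun t => f' t - a * t ^ (-(n:ℤ)))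
      (g := fun t => ε * φ t) (g' := fun t => ε * t ^ (-(n:ℤ)))
      (fun t ht => ((hf t (Set.mem_Ici.2 (hfacts t ht).2.1)).sub
        ((hφd t (hfacts t ht).1).const_mul a)))
      (fun t ht => (hφd t (hfacts t ht).1).const_mul ε)
      ?_
    · intro s t hs hst
      have := H s t hs hst
      rw [mul_sub]
      exact this
    · intro t ht
      obtain ⟨htpos, -, hNt⟩ := hfacts t ht
      have hN' : |t ^ n * f' t - a| ≤ ε := hN t hNt
      have hpow : (0:ℝ) < t ^ n := pow_pos htpos n
      have hz : t ^ (-(n:ℤ)) = (t ^ n)⁻¹ := by rw [zpow_neg, zpow_natCast]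
      show |f' t - a * t ^ (-(n:ℤ))| ≤ ε * t ^ (-(n:ℤ))
      rw [hz, show f' t - a * (t ^ n)⁻¹ = (t ^ n * f' t - a) / t ^ n by field_simp,
        show ε * (t ^ n)⁻¹ = ε / t ^ n by ring, abs_div, abs_of_pos hpow]
      exact (div_le_div_iff_of_pos_right hpow).2 hN'
  obtain ⟨T₁, ⟨hT₁1, hT₁0⟩, hT₁⟩ := main 1 zero_lt_one
  have hTk : ∀ k : ℕ, T₁ ≤ T₁ + k := fun k => le_add_of_nonneg_right (Nat.cast_nonneg k)
  have hTkpos : ∀ k : ℕ, 0 < T₁ + k := fun k =>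
    lt_of_lt_of_le zero_lt_one (le_trans hT₁1 (hTk k))
  have hTk1 : ∀ k : ℕ, (1:ℝ) ≤ T₁ + k := fun k => le_trans hT₁1 (hTk k)
  have hb : Tendsto (fun N : ℕ => -φ (T₁ + N)) atTop (nhds 0) := by
    have h1 : Tendsto (fun N : ℕ => T₁ + (N:ℝ)) atTop atTop :=
      tendsto_atTop_add_const_left _ _ tendsto_natCast_atTop_atTop
    simpa using (hφ0.comp h1).neg
  have hcau : CauchySeq (fun k : ℕ => f (T₁ + k) - a * φ (T₁ + k)) := by
    apply cauchySeq_of_le_tendsto_0 (fun N : ℕ => -φ (T₁ + N)) _ hb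
    intro i j N hi hj
    wlog hij : i ≤ j generalizing i j
    · rw [dist_comm]; exact this j i hj hi (le_of_not_ge hij)
    have hmono2 : φ (T₁ + N) ≤ φ (T₁ + i) :=
      hφmono (Set.mem_Ici.2 (hTk1 N)) (Set.mem_Ici.2 (hTk1 i))
        (by have : (N:ℝ) ≤ i := Nat.cast_le.2 hi; linarith)
    have hneg : φ (T₁ + j) ≤ 0 := hφneg _ (hTkpos j)
    have hest := hT₁ (T₁ + i) (T₁ + j) (hTk i)
      (by have : (i:ℝ) ≤ j := Nat.cast_le.2 hij; linarith)
    rw [Real.dist_eq, abs_sub_comm]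
    calc |(f (T₁ + j) - a * φ (T₁ + j)) - (f (T₁ + i) - a * φ (T₁ + i))|
        ≤ 1 * (φ (T₁ + j) - φ (T₁ + i)) := hest
      _ ≤ -φ (T₁ + N) := by linarith
  obtain ⟨Lh, hLh⟩ := cauchySeq_tendsto_of_complete hcau
  have claim2 : ∀ ε : ℝ, 0 < ε → ∀ᶠ t in atTop, |(f t - a * φ t) - Lh| ≤ ε * (-φ t) := by
    intro ε hε
    obtain ⟨T, ⟨hT1, hT0⟩, hT⟩ := main ε hε
    filter_upwards [eventually_ge_atTop (max T T₁)] with t ht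
    have htT : T ≤ t := le_trans (le_max_left _ _) ht
    have htT₁ : T₁ ≤ t := le_trans (le_max_right _ _) ht
    have hd : Tendsto (fun k : ℕ => |(f (T₁+k) - a*φ (T₁+k)) - (f t - a*φ t)|) atTop
        (nhds |Lh - (f t - a*φ t)|) := ((hLh.sub_const _).abs)
    have hbound : ∀ᶠ k : ℕ in atTop,
        |(f (T₁+k) - a*φ (T₁+k)) - (f t - a*φ t)| ≤ ε * (-φ t) := by
      filter_upwards [eventually_ge_atTop ⌈t - T₁⌉₊] with k hk
      have hkc : (⌈t - T₁⌉₊ : ℝ) ≤ k := Nat.cast_le.2 hk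
      have hkt : t ≤ T₁ + k := by linarith [Nat.le_ceil (t - T₁)]
      have hest := hT t (T₁ + k) htT hkt
      have hφt' : φ (T₁ + k) ≤ 0 := hφneg _ (hTkpos k)
      calc |(f (T₁+k) - a*φ (T₁+k)) - (f t - a*φ t)|
          ≤ ε * (φ (T₁ + k) - φ t) := hest
        _ ≤ ε * (-φ t) := by nlinarith
    have hle2 := le_of_tendsto hd hbound
    rwa [abs_sub_comm] at hle2
  have hh : Tendsto (fun t => f t - a * φ t) atTop (nhds Lh) := by
    rw [← tendsto_sub_nhds_zero_iff]
    refine squeeze_zero_norm' (a := fun t => 1 * (-φ t)) ?_ ?_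
    · filter_upwards [claim2 1 zero_lt_one] with t ht
      simpa [Real.norm_eq_abs] using ht
    · simpa using hφ0.neg
  have hfL : Tendsto f atTop (nhds Lh) := by
    have := hh.add (hφ0.const_mul a)
    simp only [mul_zero, add_zero] at this
    exact this.congr (fun t => by ring)
  refine ⟨Lh, hfL, ?_⟩
  have hA : Tendsto (fun t => (t:ℝ) ^ (n-1) * ((f t - a * φ t) - Lh)) atTop (nhds 0) := by
    rw [Metric.tendsto_nhds]
    intro ε hε
    filter_upwards [claim2 (ε/2) (by linarith), eventually_ge_atTop (1:ℝ)] with t ht ht1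
    have htpos : (0:ℝ) < t := lt_of_lt_of_le zero_lt_one ht1
    have key : t ^ (n-1) * (-φ t) = ((n:ℝ) - 1)⁻¹ := by
      have e1 : (t:ℝ) ^ (n-1) = t ^ ((n:ℤ) - 1) := by
        rw [← zpow_natCast t (n-1)]
        congr 1
        omega
      rw [hφdef]
      simp only
      rw [e1, show -(t ^ (1-(n:ℤ)) / (1 - (n:ℝ))) = t ^ (1-(n:ℤ)) / ((n:ℝ) - 1) by
        rw [show ((n:ℝ) - 1) = -(1 - (n:ℝ)) by ring, div_neg]]
      rw [mul_div_assoc', ← zpow_add₀ (ne_of_gt htpos), show (n:ℤ) - 1 + (1 - (n:ℤ)) = 0 by ring,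
        zpow_zero, one_div]
    rw [Real.dist_eq, sub_zero, abs_mul, abs_pow, abs_of_pos htpos]
    have hinv : ((n:ℝ) - 1)⁻¹ ≤ 1 := by
      rw [inv_le_one_iff₀]
      right; linarith
    calc t ^ (n-1) * |(f t - a * φ t) - Lh|
        ≤ t ^ (n-1) * (ε/2 * (-φ t)) := by
          apply mul_le_mul_of_nonneg_left ht (pow_nonneg htpos.le _)
      _ = ε/2 * (t ^ (n-1) * (-φ t)) := by ring
      _ = ε/2 * ((n:ℝ) - 1)⁻¹ := by rw [key]
      _ ≤ ε/2 * 1 := by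
          apply mul_le_mul_of_nonneg_left hinv (by linarith)
      _ < ε := by linarith
  have hB : Tendsto (fun t => a * ((t:ℝ) ^ (n-1) * φ t)) atTop (nhds (a / (1 - (n:ℝ)))) := by
    apply Tendsto.congr' _ (tendsto_const_nhds (x := a / (1 - (n:ℝ))))
    filter_upwards [eventually_ge_atTop (1:ℝ)] with t ht1
    have htpos : (0:ℝ) < t := lt_of_lt_of_le zero_lt_one ht1
    have e1 : (t:ℝ) ^ (n-1) = t ^ ((n:ℤ) - 1) := by
      rw [← zpow_natCast t (n-1)]; congr 1; omega
    rw [hφdef]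
    simp only
    rw [e1, mul_div_assoc', ← zpow_add₀ (ne_of_gt htpos),
      show (n:ℤ) - 1 + (1 - (n:ℤ)) = 0 by ring, zpow_zero]
    rw [mul_one_div]
  have := hA.add hB
  rw [zero_add] at this
  exact this.congr (fun t => by ring)

lemma lim_div_id {T₀ L c : ℝ} {f f' : ℝ → ℝ}
    (hf : ∀ t ∈ Set.Ici T₀, HasDerivAt f (f' t) t)
    (hf' : Tendsto f' atTop (nhds L))
    (hc : Tendsto (fun t => f t / t) atTop (nhds c)) : c = L := by
  refine tendsto_nhds_unique hc ?_
  rw [Metric.tendsto_nhds]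
  intro ε hε
  have hev : ∀ᶠ t in atTop, |f' t - L| ≤ ε/2 := by
    have h := Metric.tendsto_nhds.1 hf' (ε/2) (by linarith)
    filter_upwards [h] with t ht
    rw [Real.dist_eq] at ht; exact ht.le
  obtain ⟨N, hN⟩ := eventually_atTop.1 hev
  have H := abs_sub_le_of_deriv_bound (T := max N T₀)
    (f := fun t => f t - L * t) (f' := fun t => f' t - L)
    (g := fun t => ε/2 * t) (g' := fun t => ε/2)
    (fun t ht => (hf t (Set.mem_Ici.2 (le_trans (le_max_right _ _) ht))).sub
      (by simpa using (hasDerivAt_id t).const_mul L))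
    (fun t _ => by simpa using (hasDerivAt_id t).const_mul (ε/2))
    (fun t ht => hN t (le_trans (le_max_left _ _) ht))
  set T := max N T₀ with hTdef
  filter_upwards [eventually_ge_atTop (max T 1),
    eventually_gt_atTop ((2 * |f T - L * T| + |ε * T|) / ε)] with t ht hbig
  have htT : T ≤ t := le_trans (le_max_left _ _) ht
  have htpos : (0:ℝ) < t := lt_of_lt_of_le zero_lt_one (le_trans (le_max_right _ _) ht)
  have hest := H T t le_rfl htT
  have tri : |f t - L * t| ≤ |(f t - L * t) - (f T - L * T)| + |f T - L * T| := by
    have h := abs_add_le ((f t - L * t) - (f T - L * T)) (f T - L * T)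
    simpa using h
  have hbig' : 2 * |f T - L * T| + |ε * T| < ε * t := (div_lt_iff₀ hε).1 hbig |>.trans_eq (by ring)
  have hneg : -(ε * T) ≤ |ε * T| := neg_le_abs _
  rw [Real.dist_eq, show f t / t - L = (f t - L * t) / t by field_simp,
    abs_div, abs_of_pos htpos, div_lt_iff₀ htpos]
  linarith

theorem stmt19 (c₁ c₂ Sstar t₀ : ℝ) (hc₁ : 0 < c₁) (hc₂ : 0 < c₂)
    (x y S : ℝ → ℝ)
    (hxlim : Tendsto (fun t => x t / t) atTop (nhds c₁))
    (hylim : Tendsto (fun t => y t / t) atTop (nhds c₂))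
    (hSlim : Tendsto S atTop (nhds Sstar))
    (hdx : ∀ t ∈ Set.Ici t₀, HasDerivAt x
      (1 / 3 + x t ^ 2 / (6 * y t ^ 2) + 2 * S t / (3 * y t ^ 2)) t)
    (hdxy : ∀ t ∈ Set.Ici t₀, HasDerivAt (fun s => x s / y s)
      (S t / y t ^ 3) t) :
    Tendsto (fun t => t ^ 2 * (x t / y t - c₁ / c₂)) atTop
      (nhds (-(c₁ / c₂ * (Sstar / (2 * c₁ * c₂ ^ 2))))) ∧
    Tendsto (fun t => t ^ 2 * (deriv x t - c₁)) atTop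
      (nhds (-((c₁ ^ 2 - 4 * c₂ ^ 2) / (18 * c₁ * c₂ ^ 4) * Sstar))) ∧
    ∃ k : ℝ, Tendsto
      (fun t => t * (x t - (c₁ * t + k
        + (c₁ ^ 2 - 4 * c₂ ^ 2) / (18 * c₁ * c₂ ^ 4) * Sstar * t⁻¹)))
      atTop (nhds 0) := by
  have hc₂' : c₂ ≠ 0 := ne_of_gt hc₂
  have hc₁' : c₁ ≠ 0 := ne_of_gt hc₁
  have hty : Tendsto (fun t => t / y t) atTop (nhds c₂⁻¹) :=
    (hylim.inv₀ hc₂').congr (fun t => by rw [inv_div])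
  have hxy : Tendsto (fun t => x t / y t) atTop (nhds (c₁ / c₂)) := by
    have h := hxlim.mul hty
    rw [div_eq_mul_inv]
    apply h.congr'
    filter_upwards [eventually_ne_atTop (0:ℝ)] with t ht
    rcases eq_or_ne (y t) 0 with hy | hy
    · simp [hy]
    · field_simp
  -- Part 1
  have hlim3 : Tendsto (fun t => t ^ 3 * (S t / y t ^ 3)) atTop
      (nhds (Sstar * (c₂⁻¹)^3)) := by
    apply (hSlim.mul (hty.pow 3)).congr
    intro t
    rw [div_pow]
    ring
  obtain ⟨L₁, hL₁f, hL₁⟩ := asymp_integration (n := 3) (by norm_num) hdxy hlim3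
  have hL₁eq : L₁ = c₁ / c₂ := tendsto_nhds_unique hL₁f hxy
  subst hL₁eq
  have part1 : Tendsto (fun t => t ^ 2 * (x t / y t - c₁ / c₂)) atTop
      (nhds (-(c₁ / c₂ * (Sstar / (2 * c₁ * c₂ ^ 2))))) := by
    have hval : -(c₁ / c₂ * (Sstar / (2 * c₁ * c₂ ^ 2)))
        = Sstar * (c₂⁻¹)^3 / (1 - ((3:ℕ):ℝ)) := by
      push_cast
      field_simp
      ring
    rw [hval]
    exact hL₁
  -- eventual positivity of y
  have hy_pos : ∀ᶠ t in atTop, 0 < y t := by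
    have h1 : ∀ᶠ t in atTop, c₂/2 < y t / t :=
      hylim.eventually (eventually_gt_nhds (by linarith))
    filter_upwards [h1, eventually_gt_atTop (0:ℝ)] with t h2 h3
    have h4 := mul_pos (lt_trans (by linarith : (0:ℝ) < c₂/2) h2) h3
    rwa [div_mul_cancel₀ _ (ne_of_gt h3)] at h4
  -- limits of the derivative expression
  have hmid : Tendsto (fun t => x t ^ 2 / (6 * y t ^ 2)) atTop
      (nhds ((c₁/c₂)^2 / 6)) := by
    apply ((hxy.pow 2).div_const 6).congr
    intro t
    rw [div_pow]
    ring
  have hsmall : Tendsto (fun t => 2 * S t / (3 * y t ^ 2)) atTop (nhds 0) := by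
    have hi2 : Tendsto (fun t : ℝ => (t⁻¹)^2) atTop (nhds 0) := by
      simpa using (tendsto_inv_atTop_zero (𝕜 := ℝ)).pow 2
    have h0 : Tendsto (fun t => (2/3 * (S t * (t / y t)^2)) * (t⁻¹)^2) atTop
        (nhds ((2/3 * (Sstar * (c₂⁻¹)^2)) * 0)) :=
      ((hSlim.mul (hty.pow 2)).const_mul (2/3)).mul hi2
    rw [mul_zero] at h0
    apply h0.congr'
    filter_upwards [eventually_ne_atTop (0:ℝ)] with t ht
    rcases eq_or_ne (y t) 0 with hy | hy
    · simp [hy]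
    · field_simp
  have hDlim : Tendsto (fun t => 1 / 3 + x t ^ 2 / (6 * y t ^ 2)
      + 2 * S t / (3 * y t ^ 2)) atTop (nhds (1/3 + (c₁/c₂)^2/6 + 0)) :=
    (tendsto_const_nhds.add hmid).add hsmall
  have hkey : c₁ = 1/3 + (c₁/c₂)^2/6 + 0 := lim_div_id hdx hDlim hxlim
  rw [add_zero] at hkey hDlim
  -- Part 2
  have hterm1 : Tendsto (fun t => (t^2 * (x t / y t - c₁/c₂)) * ((x t / y t + c₁/c₂) / 6))
      atTop (nhds ((-(c₁ / c₂ * (Sstar / (2 * c₁ * c₂ ^ 2)))) * ((c₁/c₂ + c₁/c₂)/6))) :=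
    part1.mul ((hxy.add tendsto_const_nhds).div_const 6)
  have hterm2 : Tendsto (fun t => 2/3 * (S t * (t / y t)^2)) atTop
      (nhds (2/3 * (Sstar * (c₂⁻¹)^2))) :=
    (hSlim.mul (hty.pow 2)).const_mul (2/3)
  have hconst2 : (-(c₁ / c₂ * (Sstar / (2 * c₁ * c₂ ^ 2)))) * ((c₁/c₂ + c₁/c₂)/6)
      + 2/3 * (Sstar * (c₂⁻¹)^2)
      = -((c₁ ^ 2 - 4 * c₂ ^ 2) / (18 * c₁ * c₂ ^ 4) * Sstar) := by
    have hpoly : c₁ ^ 2 = 6 * c₁ * c₂ ^ 2 - 2 * c₂ ^ 2 := by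
      field_simp at hkey
      nlinarith [hkey]
    field_simp
    linear_combination (-72 * Sstar) * hpoly
  have hlim2 : Tendsto (fun t => t ^ 2 * ((1 / 3 + x t ^ 2 / (6 * y t ^ 2)
      + 2 * S t / (3 * y t ^ 2)) - c₁)) atTop
      (nhds (-((c₁ ^ 2 - 4 * c₂ ^ 2) / (18 * c₁ * c₂ ^ 4) * Sstar))) := by
    rw [← hconst2]
    apply (hterm1.add hterm2).congr'
    filter_upwards [hy_pos, eventually_ne_atTop (0:ℝ)] with t hy ht
    have hyne : y t ≠ 0 := ne_of_gt hy
    conv_rhs => rw [hkey]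
    field_simp
    ring
  have part2 : Tendsto (fun t => t ^ 2 * (deriv x t - c₁)) atTop
      (nhds (-((c₁ ^ 2 - 4 * c₂ ^ 2) / (18 * c₁ * c₂ ^ 4) * Sstar))) := by
    apply hlim2.congr'
    filter_upwards [eventually_ge_atTop t₀] with t ht
    rw [(hdx t (Set.mem_Ici.2 ht)).deriv]
  -- Part 3
  have hf3 : ∀ t ∈ Set.Ici t₀, HasDerivAt (fun s => x s - c₁ * s)
      ((1 / 3 + x t ^ 2 / (6 * y t ^ 2) + 2 * S t / (3 * y t ^ 2)) - c₁) t :=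
    fun t ht => (hdx t ht).sub (by simpa using (hasDerivAt_id t).const_mul c₁)
  obtain ⟨k, hkf, hk1⟩ := asymp_integration (n := 2) le_rfl hf3 hlim2
  refine ⟨part1, part2, k, ?_⟩
  have hval2 : (-((c₁ ^ 2 - 4 * c₂ ^ 2) / (18 * c₁ * c₂ ^ 4) * Sstar)) / (1 - ((2:ℕ):ℝ))
      = (c₁ ^ 2 - 4 * c₂ ^ 2) / (18 * c₁ * c₂ ^ 4) * Sstar := by
    norm_num
  rw [hval2] at hk1
  have hfin := hk1.sub_const ((c₁ ^ 2 - 4 * c₂ ^ 2) / (18 * c₁ * c₂ ^ 4) * Sstar)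
  rw [sub_self] at hfin
  apply hfin.congr'
  filter_upwards [eventually_ne_atTop (0:ℝ)] with t ht
  simp only [show (2:ℕ) - 1 = 1 from rfl, pow_one]
  field_simp
  ring
end
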